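/- In a toroidal polyhedral map, if V is the number of vertices then V ≥ 7; dually, the number of faces F satisfies F ≥ 7. -/

import Mathlib

/-- The setoid on a type given by "same cycle of the permutation `p`". -/
def sameCycleSetoid {D : Type*} (p : Equiv.Perm D) : Setoid D :=
  ⟨p.SameCycle, ⟨fun x => Equiv.Perm.SameCycle.refl p x,
    fun h => h.symm, fun h h' => h.trans h'⟩⟩

/-- The number of cycles (orbits) of a permutation. -/
noncomputable def numCycles {D : Type*} (p : Equiv.Perm D) : ℕ :=
  Nat.card (Quotient (sameCycleSetoid p))

/-- A combinatorial map: a finite set of darts, a vertex-rotation permutation `σ`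
(whose cycles are the vertices with their cyclic order of incident darts), and a
fixed-point-free involution `α` pairing the two darts of each edge.
Faces are the cycles of `σ * α`. -/
structure TorusMap where
  D : Type
  [fin : Fintype D]
  σ : Equiv.Perm D
  α : Equiv.Perm D
  α_invol : ∀ d, α (α d) = d
  α_nofix : ∀ d, α d ≠ d

namespace TorusMap

variable (M : TorusMap)

instance : Fintype M.D := M.fin

/-- The face-tracing permutation. -/
def φ : Equiv.Perm M.D := M.σ * M.α

noncomputable def V : ℕ := numCycles M.σ
noncomputable def E : ℕ := numCycles M.α
noncomputable def F : ℕ := numCycles M.φ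

/-- The embedding lies on the torus: Euler characteristic `V - E + F = 0`. -/
def OnTorus : Prop := (M.V : ℤ) - M.E + M.F = 0

/-- Every vertex has degree at least 3. -/
def DegGe3 : Prop := ∀ d, M.σ d ≠ d ∧ M.σ (M.σ d) ≠ d

/-- Every face has at least 3 sides. -/
def FaceGe3 : Prop := ∀ d, M.φ d ≠ d ∧ M.φ (M.φ d) ≠ d

/-- No loops: the two darts of an edge lie at distinct vertices. -/
def NoLoop : Prop := ∀ d, ¬ M.σ.SameCycle d (M.α d)

/-- No multiple edges: two edges joining the same pair of vertices coincide. -/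
def NoMulti : Prop := ∀ d d', M.σ.SameCycle d d' → M.σ.SameCycle (M.α d) (M.α d') →
  (d' = d ∨ d' = M.α d)

/-- The underlying graph is simple. -/
def Simple : Prop := M.NoLoop ∧ M.NoMulti

/-- All faces are triangles. -/
def Triangular : Prop := ∀ d, M.φ (M.φ (M.φ d)) = d ∧ M.φ d ≠ d

/-- The boundary of each face is a simple closed curve (no repeated vertices). -/
def FaceSimple : Prop := ∀ x y, M.φ.SameCycle x y → M.σ.SameCycle x y → x = y

/-- No face traverses the same edge twice (the two sides of each edge lie on
distinct faces). -/
def FaceNoRepeatEdge : Prop := ∀ x, ¬ M.φ.SameCycle x (M.α x)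

/-- The set of darts of the face containing dart `d`. -/
def faceSet (d : M.D) : Set M.D := {x | M.φ.SameCycle d x}

/-- The vertex (a `σ`-cycle) at which a dart is based. -/
def vtxOf (d : M.D) : Quotient (sameCycleSetoid M.σ) := Quotient.mk _ d

/-- The edge (an `α`-orbit) carrying a dart. -/
def edgeOf (d : M.D) : Quotient (sameCycleSetoid M.α) := Quotient.mk _ d

/-- Vertices common to the faces of darts `d` and `d'`. -/
def sharedVerts (d d' : M.D) : Set (Quotient (sameCycleSetoid M.σ)) :=
  (M.vtxOf '' M.faceSet d) ∩ (M.vtxOf '' M.faceSet d')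

/-- Edges common to the faces of darts `d` and `d'`. -/
def sharedEdges (d d' : M.D) : Set (Quotient (sameCycleSetoid M.α)) :=
  (M.edgeOf '' M.faceSet d) ∩ (M.edgeOf '' M.faceSet d')

/-- Two faces meet properly: their intersection is empty, a single vertex, or a
single edge together with its two endpoints. -/
def MeetProperly (d d' : M.D) : Prop :=
  (M.sharedEdges d d' = ∅ ∧ (M.sharedVerts d d').Subsingleton) ∨
  (∃ e, e ∈ M.faceSet d ∧ M.sharedEdges d d' = {M.edgeOf e} ∧
    M.sharedVerts d d' = {M.vtxOf e, M.vtxOf (M.α e)})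

/-- A polyhedral map: simple graph, minimum degree 3, each face bounded by a
simple closed curve, and any two distinct faces meet properly. -/
def Polyhedral : Prop :=
  M.Simple ∧ M.DegGe3 ∧ M.FaceSimple ∧ M.FaceNoRepeatEdge ∧
    ∀ d d', ¬ M.φ.SameCycle d d' → M.MeetProperly d d'

/-- A toroidal polyhedral map (TPM). -/
def IsTPM : Prop := Nonempty M.D ∧ M.OnTorus ∧ M.Polyhedral

/-- The dual map: vertices and faces are exchanged. -/
def dual : TorusMap := ⟨M.D, M.φ, M.α, M.α_invol, M.α_nofix⟩

end TorusMap

namespace TPMProof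
open Finset

variable {M : TorusMap}

lemma sc_apply {X : Type*} (p : Equiv.Perm X) (d : X) : p.SameCycle d (p d) := ⟨1, rfl⟩

lemma alpha_sameCycle_iff {a b : M.D} : M.α.SameCycle a b ↔ b = a ∨ b = M.α a := by
  constructor
  · rintro ⟨n, rfl⟩
    have h2 : M.α ^ (2:ℤ) = 1 := by
      rw [show (2:ℤ) = 1 + 1 from rfl, zpow_add, zpow_one]
      ext d
      simp [M.α_invol d]
    rcases Int.even_or_odd n with ⟨k, hk⟩ | ⟨k, hk⟩
    · left
      have : M.α ^ n = 1 := by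
        rw [hk, show k + k = 2 * k by ring, zpow_mul, h2, one_zpow]
      rw [this]; rfl
    · right
      have : M.α ^ n = M.α := by
        rw [hk, zpow_add, zpow_mul, h2, one_zpow, one_mul, zpow_one]
      rw [this]
  · rintro (rfl | rfl)
    · exact ⟨0, rfl⟩
    · exact ⟨1, rfl⟩

lemma vtxOf_eq_iff {a b : M.D} : M.vtxOf a = M.vtxOf b ↔ M.σ.SameCycle a b :=
  ⟨Quotient.exact, fun h => Quot.sound h⟩

lemma edgeOf_eq_iff {a b : M.D} : M.edgeOf a = M.edgeOf b ↔ (b = a ∨ b = M.α a) := by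
  rw [show (M.edgeOf a = M.edgeOf b) ↔ M.α.SameCycle a b from ⟨Quotient.exact, fun h => Quot.sound h⟩]
  exact alpha_sameCycle_iff

lemma edgeOf_alpha (d : M.D) : M.edgeOf (M.α d) = M.edgeOf d :=
  (edgeOf_eq_iff.mpr (Or.inr rfl)).symm

/-- face class -/
def fOf (M : TorusMap) (d : M.D) : Quotient (sameCycleSetoid M.φ) :=
  Quotient.mk (sameCycleSetoid M.φ) d

lemma fOf_eq_iff {a b : M.D} : fOf M a = fOf M b ↔ M.φ.SameCycle a b :=
  ⟨Quotient.exact, fun h => Quot.sound h⟩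

lemma phi_apply (d : M.D) : M.φ d = M.σ (M.α d) := rfl

lemma mem_faceSet {d x : M.D} : x ∈ M.faceSet d ↔ M.φ.SameCycle d x := Iff.rfl

lemma faceGe3 (h : M.IsTPM) : M.FaceGe3 := by
  obtain ⟨-, -, ⟨noloop, nomulti⟩, -, -, fnorep, -⟩ := h
  intro d
  have h1 : M.φ d ≠ d := by
    intro hfix
    have hx : M.σ.SameCycle (M.α d) d := by
      have := sc_apply M.σ (M.α d)
      rwa [← phi_apply, hfix] at this
    exact noloop d hx.symm
  refine ⟨h1, ?_⟩
  intro h2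
  -- e := φ d
  have hde : M.σ.SameCycle (M.α d) (M.φ d) := sc_apply M.σ (M.α d)
  have hed : M.σ.SameCycle (M.α (M.φ d)) d := by
    have := sc_apply M.σ (M.α (M.φ d))
    rwa [← phi_apply, h2] at this
  have := nomulti d (M.α (M.φ d)) hed.symm (by rw [M.α_invol]; exact hde)
  rcases this with heq | heq
  · have h3 : M.φ d = M.α d := by
      have := congrArg M.α heq
      rwa [M.α_invol] at this
    have := sc_apply M.φ d
    rw [h3] at this
    exact fnorep d this
  · have : M.φ d = d := by
      have := congrArg M.α heq
      rwa [M.α_invol, M.α_invol] at this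
    exact h1 this


attribute [local instance] Classical.propDecidable

noncomputable instance instFintypeQuot {D : Type*} [Fintype D] (s : Setoid D) :
    Fintype (Quotient s) :=
  @Quotient.fintype _ _ s (fun _ _ => Classical.dec _)

lemma numCycles_eq {D : Type*} [Fintype D] (p : Equiv.Perm D) :
    numCycles p = Fintype.card (Quotient (sameCycleSetoid p)) :=
  Nat.card_eq_fintype_card

lemma alpha_fiber_card (M : TorusMap) (q : Quotient (sameCycleSetoid M.α)) :
    (univ.filter (fun x => Quotient.mk (sameCycleSetoid M.α) x = q)).card = 2 := by
  induction q using Quotient.ind with | _ d => ?_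
  have hset : (univ.filter (fun x => Quotient.mk (sameCycleSetoid M.α) x =
      Quotient.mk (sameCycleSetoid M.α) d)) = {d, M.α d} := by
    ext x
    simp only [mem_filter, mem_univ, true_and, mem_insert, mem_singleton]
    constructor
    · intro hx
      have : M.α.SameCycle d x := (Quotient.exact hx).symm
      exact alpha_sameCycle_iff.mp this
    · rintro (rfl | rfl)
      · rfl
      · exact Quot.sound (alpha_sameCycle_iff.mpr (Or.inr rfl)).symm
  rw [hset]
  rw [Finset.card_insert_of_notMem (by simp [Ne.symm (M.α_nofix d)]), Finset.card_singleton]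

lemma cardD_eq (M : TorusMap) : Fintype.card M.D = 2 * M.E := by
  rw [show M.E = Fintype.card (Quotient (sameCycleSetoid M.α)) from numCycles_eq _]
  rw [← Finset.card_univ (α := M.D)]
  rw [Finset.card_eq_sum_card_fiberwise
    (f := fun x => Quotient.mk (sameCycleSetoid M.α) x) (t := univ) (fun x _ => mem_univ _)]
  rw [Finset.sum_congr rfl (fun q _ => alpha_fiber_card M q)]
  simp [Finset.card_univ, mul_comm]

lemma three_le_fiber {D : Type*} [Fintype D] (p : Equiv.Perm D)
    (hp : ∀ d, p d ≠ d ∧ p (p d) ≠ d) (q : Quotient (sameCycleSetoid p)) :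
    3 ≤ (univ.filter (fun x => Quotient.mk (sameCycleSetoid p) x = q)).card := by
  induction q using Quotient.ind with | _ d => ?_
  have hsub : ({d, p d, p (p d)} : Finset D) ⊆
      univ.filter (fun x => Quotient.mk (sameCycleSetoid p) x = Quotient.mk (sameCycleSetoid p) d) := by
    intro x hx
    simp only [mem_insert, mem_singleton] at hx
    simp only [mem_filter, mem_univ, true_and]
    rcases hx with rfl | rfl | rfl
    · rfl
    · exact Quot.sound (sc_apply p d).symm
    · exact Quot.sound ((sc_apply p d).trans (sc_apply p (p d))).symm
  have hcard : ({d, p d, p (p d)} : Finset D).card = 3 := by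
    have h1 : p d ≠ d := (hp d).1
    have h2 : p (p d) ≠ d := (hp d).2
    have h3 : p d ≠ p (p d) := by
      intro hh
      exact h1 (p.injective hh).symm
    rw [Finset.card_insert_of_notMem (by simp [Ne.symm h1, Ne.symm h2]),
        Finset.card_insert_of_notMem (by simp [h3]), Finset.card_singleton]
  calc 3 = ({d, p d, p (p d)} : Finset D).card := hcard.symm
    _ ≤ _ := Finset.card_le_card hsub

lemma euler_nat (M : TorusMap) (h : M.OnTorus) : M.E = M.V + M.F := by
  have h' : (M.E : ℤ) = (M.V : ℤ) + (M.F : ℤ) := by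
    unfold TorusMap.OnTorus at h
    linarith
  exact_mod_cast h'

lemma pair_cases {X : Type*} {A B u w : X} (hAB : A ≠ B) (hne : u ≠ w)
    (hu : u = A ∨ u = B) (hw : w = A ∨ w = B) : (A = u ∧ B = w) ∨ (A = w ∧ B = u) := by
  rcases hu with rfl | rfl <;> rcases hw with rfl | rfl
  · exact absurd rfl hne
  · exact Or.inl ⟨rfl, rfl⟩
  · exact Or.inr ⟨rfl, rfl⟩
  · exact absurd rfl hne

lemma same_edge (hM : M.IsTPM) {e e' : M.D}
    (hc : (M.vtxOf e' = M.vtxOf e ∧ M.vtxOf (M.α e') = M.vtxOf (M.α e)) ∨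
          (M.vtxOf e' = M.vtxOf (M.α e) ∧ M.vtxOf (M.α e') = M.vtxOf e)) :
    e' = e ∨ e' = M.α e := by
  obtain ⟨-, -, ⟨-, nomulti⟩, -, -, -, -⟩ := hM
  rcases hc with ⟨h1, h2⟩ | ⟨h1, h2⟩
  · exact nomulti e e' (Quotient.exact h1).symm (Quotient.exact h2).symm
  · have := nomulti e (M.α e') (Quotient.exact h2).symm
      (by rw [M.α_invol]; exact (Quotient.exact h1).symm)
    rcases this with hh | hh
    · right
      have := congrArg M.α hh
      rwa [M.α_invol] at this
    · left
      have := congrArg M.α hh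
      rwa [M.α_invol, M.α_invol] at this

lemma same_edge_of_endpoints (hM : M.IsTPM) {a b e e' : M.D}
    (he : (M.vtxOf e = M.vtxOf a ∧ M.vtxOf (M.α e) = M.vtxOf b) ∨
          (M.vtxOf e = M.vtxOf b ∧ M.vtxOf (M.α e) = M.vtxOf a))
    (he' : (M.vtxOf e' = M.vtxOf a ∧ M.vtxOf (M.α e') = M.vtxOf b) ∨
           (M.vtxOf e' = M.vtxOf b ∧ M.vtxOf (M.α e') = M.vtxOf a)) :
    e' = e ∨ e' = M.α e := by
  apply same_edge hM
  rcases he with ⟨h1, h2⟩ | ⟨h1, h2⟩ <;> rcases he' with ⟨h3, h4⟩ | ⟨h3, h4⟩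
  · exact Or.inl ⟨h3.trans h1.symm, h4.trans h2.symm⟩
  · exact Or.inr ⟨h3.trans h2.symm, h4.trans h1.symm⟩
  · exact Or.inr ⟨h3.trans h2.symm, h4.trans h1.symm⟩
  · exact Or.inl ⟨h3.trans h1.symm, h4.trans h2.symm⟩

/-- If two distinct faces share two distinct vertices, they share an edge `e`
with exactly those endpoints, lying on the first face, and the second face
carries `e` or `α e`. -/
lemma shared_edge_of_two_verts (hM : M.IsTPM) {x x' a b a' b' : M.D}
    (hxx' : ¬ M.φ.SameCycle x x')
    (ha : M.φ.SameCycle x a) (hb : M.φ.SameCycle x b)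
    (ha' : M.φ.SameCycle x' a') (hb' : M.φ.SameCycle x' b')
    (hva : M.vtxOf a = M.vtxOf a') (hvb : M.vtxOf b = M.vtxOf b')
    (hab : M.vtxOf a ≠ M.vtxOf b) :
    ∃ e, M.φ.SameCycle x e ∧ (M.φ.SameCycle x' e ∨ M.φ.SameCycle x' (M.α e)) ∧
      ((M.vtxOf e = M.vtxOf a ∧ M.vtxOf (M.α e) = M.vtxOf b) ∨
       (M.vtxOf e = M.vtxOf b ∧ M.vtxOf (M.α e) = M.vtxOf a)) := by
  obtain ⟨-, -, ⟨noloop, -⟩, -, -, -, meet⟩ := hM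
  have hu : M.vtxOf a ∈ M.sharedVerts x x' := ⟨⟨a, ha, rfl⟩, ⟨a', ha', hva.symm⟩⟩
  have hw : M.vtxOf b ∈ M.sharedVerts x x' := ⟨⟨b, hb, rfl⟩, ⟨b', hb', hvb.symm⟩⟩
  rcases meet x x' hxx' with ⟨-, hsub⟩ | ⟨e, heface, hedges, hverts⟩
  · exact absurd (hsub hu hw) hab
  · rw [hverts] at hu hw
    have hAB : M.vtxOf e ≠ M.vtxOf (M.α e) := by
      intro hh
      exact noloop e (vtxOf_eq_iff.mp hh)
    have horient := pair_cases hAB hab hu hw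
    have hmem : M.edgeOf e ∈ M.sharedEdges x x' := by rw [hedges]; rfl
    obtain ⟨z, hz, hze⟩ := hmem.2
    have hcase : e = z ∨ e = M.α z := edgeOf_eq_iff.mp hze
    refine ⟨e, heface, ?_, by tauto⟩
    rcases hcase with rfl | hez
    · exact Or.inl hz
    · right
      have hza : z = M.α e := by
        have h5 := congrArg M.α hez
        rw [M.α_invol] at h5
        exact h5.symm
      rwa [hza] at hz

lemma arith1 {n : ℕ} (h : 3 ≤ n) : 4 * n ≤ (n * n - n) + 6 := by
  obtain ⟨m, rfl⟩ := Nat.exists_eq_add_of_le h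
  have hmm : (3 + m) * (3 + m) = m * m + 6 * m + 9 := by ring
  omega

theorem sevenV (M : TorusMap) (hM : M.IsTPM) : 7 ≤ M.V := by
  obtain ⟨hne, ht, hpoly⟩ := hM
  obtain ⟨⟨noloop, nomulti⟩, deg3, fsimple, fnorep, meet⟩ := hpoly
  have hTPM : M.IsTPM := ⟨hne, ht, ⟨noloop, nomulti⟩, deg3, fsimple, fnorep, meet⟩
  have hface3 : M.FaceGe3 := faceGe3 hTPM
  obtain ⟨d0⟩ := hne
  have hVcard : M.V = Fintype.card (Quotient (sameCycleSetoid M.σ)) := numCycles_eq _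
  have hFcard : M.F = Fintype.card (Quotient (sameCycleSetoid M.φ)) := numCycles_eq _
  have hD2E : Fintype.card M.D = 2 * M.E := cardD_eq M
  have hE : M.E = M.V + M.F := euler_nat M ht
  have hV1 : 1 ≤ M.V := by
    rw [hVcard]
    exact Fintype.card_pos_iff.mpr ⟨M.vtxOf d0⟩
  set S : Finset (M.D × M.D) :=
    univ.filter (fun p => p.1 ≠ p.2 ∧ M.φ.SameCycle p.1 p.2) with hSdef
  have hSmem : ∀ p : M.D × M.D, p ∈ S ↔ (p.1 ≠ p.2 ∧ M.φ.SameCycle p.1 p.2) := by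
    intro p
    simp only [hSdef, Finset.mem_filter, Finset.mem_univ, true_and]
  -- LOWER BOUND
  have hlow : 4 * Fintype.card M.D ≤ S.card + 6 * M.F := by
    have hDsum : Fintype.card M.D
        = ∑ q : Quotient (sameCycleSetoid M.φ),
            (univ.filter (fun x => Quotient.mk (sameCycleSetoid M.φ) x = q)).card := by
      rw [← Finset.card_univ]
      exact Finset.card_eq_sum_card_fiberwise (fun x _ => mem_univ _)
    have hSsum : S.card = ∑ q : Quotient (sameCycleSetoid M.φ),
        ((univ.filter (fun x => Quotient.mk (sameCycleSetoid M.φ) x = q)).offDiag).card := by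
      rw [Finset.card_eq_sum_card_fiberwise
        (f := fun p : M.D × M.D => Quotient.mk (sameCycleSetoid M.φ) p.1)
        (t := univ) (fun p _ => mem_univ _)]
      refine Finset.sum_congr rfl (fun q _ => ?_)
      congr 1
      ext p
      simp only [Finset.mem_filter, Finset.mem_offDiag, Finset.mem_univ, true_and]
      constructor
      · rintro ⟨hpS, hq⟩
        obtain ⟨hne12, hsc⟩ := (hSmem p).mp hpS
        exact ⟨hq, (Quot.sound hsc.symm).trans hq, hne12⟩
      · rintro ⟨h1, h2, h3⟩
        exact ⟨(hSmem p).mpr ⟨h3, Quotient.exact (h1.trans h2.symm)⟩, h1⟩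
    calc 4 * Fintype.card M.D
        = ∑ q : Quotient (sameCycleSetoid M.φ),
            4 * (univ.filter (fun x => Quotient.mk (sameCycleSetoid M.φ) x = q)).card := by
          rw [hDsum, Finset.mul_sum]
      _ ≤ ∑ q : Quotient (sameCycleSetoid M.φ),
            ((((univ.filter (fun x => Quotient.mk (sameCycleSetoid M.φ) x = q)).card *
              (univ.filter (fun x => Quotient.mk (sameCycleSetoid M.φ) x = q)).card -
              (univ.filter (fun x => Quotient.mk (sameCycleSetoid M.φ) x = q)).card)) + 6) := by
          refine Finset.sum_le_sum (fun q _ => ?_)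
          exact arith1 (three_le_fiber M.φ hface3 q)
      _ = S.card + 6 * M.F := by
          rw [Finset.sum_add_distrib, Finset.sum_const, Finset.card_univ, smul_eq_mul, hSsum]
          have : ∀ q : Quotient (sameCycleSetoid M.φ),
              ((univ.filter (fun x => Quotient.mk (sameCycleSetoid M.φ) x = q)).offDiag).card =
              ((univ.filter (fun x => Quotient.mk (sameCycleSetoid M.φ) x = q)).card *
               (univ.filter (fun x => Quotient.mk (sameCycleSetoid M.φ) x = q)).card -
               (univ.filter (fun x => Quotient.mk (sameCycleSetoid M.φ) x = q)).card) :=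
            fun q => Finset.offDiag_card _
          rw [Finset.sum_congr rfl (fun q _ => this q), hFcard]
          ring
  -- UPPER BOUND
  have hfs : ∀ p : M.D × M.D, p ∈ S → M.vtxOf p.1 ≠ M.vtxOf p.2 := by
    intro p hp hh
    obtain ⟨hne12, hsc⟩ := (hSmem p).mp hp
    exact hne12 (fsimple p.1 p.2 hsc (Quotient.exact hh))
  set t := (univ : Finset (Quotient (sameCycleSetoid M.σ))).offDiag with htdef
  set Φ : M.D × M.D → Quotient (sameCycleSetoid M.σ) × Quotient (sameCycleSetoid M.σ) :=
    fun p => (M.vtxOf p.1, M.vtxOf p.2) with hPhidef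
  have hmemt : ∀ p ∈ S, Φ p ∈ t := fun p hp =>
    Finset.mem_offDiag.mpr ⟨mem_univ _, mem_univ _, hfs p hp⟩
  have hSsum2 : S.card = ∑ P ∈ t, (S.filter (fun p => Φ p = P)).card :=
    Finset.card_eq_sum_card_fiberwise hmemt
  have hfibmem : ∀ (P : Quotient (sameCycleSetoid M.σ) × Quotient (sameCycleSetoid M.σ))
      (p : M.D × M.D), p ∈ S.filter (fun p => Φ p = P) →
      p.1 ≠ p.2 ∧ M.φ.SameCycle p.1 p.2 ∧ M.vtxOf p.1 = P.1 ∧ M.vtxOf p.2 = P.2 := by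
    intro P p hp
    rw [Finset.mem_filter] at hp
    obtain ⟨hpS, hq⟩ := hp
    obtain ⟨h1, h2⟩ := (hSmem p).mp hpS
    exact ⟨h1, h2, congrArg Prod.fst hq, congrArg Prod.snd hq⟩
  have huniq : ∀ (P : Quotient (sameCycleSetoid M.σ) × Quotient (sameCycleSetoid M.σ)),
      ∀ p ∈ S.filter (fun p => Φ p = P),
      ∀ p' ∈ S.filter (fun p => Φ p = P), M.φ.SameCycle p.1 p'.1 → p = p' := by
    intro P p hp p' hp' hsc
    obtain ⟨hne1, hc1, hv1, hw1⟩ := hfibmem P p hp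
    obtain ⟨hne2, hc2, hv2, hw2⟩ := hfibmem P p' hp'
    have hx : p.1 = p'.1 := fsimple _ _ hsc (Quotient.exact (hv1.trans hv2.symm))
    have hc2' : M.φ.SameCycle p.1 p'.2 := by rw [hx]; exact hc2
    have hy : p.2 = p'.2 :=
      fsimple _ _ (hc1.symm.trans hc2') (Quotient.exact (hw1.trans hw2.symm))
    exact Prod.ext_iff.mpr ⟨hx, hy⟩
  have hEx : ∀ (P : Quotient (sameCycleSetoid M.σ) × Quotient (sameCycleSetoid M.σ)),
      P ∈ t → ∀ p1 ∈ S.filter (fun p => Φ p = P), ∀ p ∈ S.filter (fun p => Φ p = P),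
      ¬ M.φ.SameCycle p1.1 p.1 →
      ∃ e, M.φ.SameCycle p1.1 e ∧ (M.φ.SameCycle p.1 e ∨ M.φ.SameCycle p.1 (M.α e)) ∧
        ((M.vtxOf e = M.vtxOf p1.1 ∧ M.vtxOf (M.α e) = M.vtxOf p1.2) ∨
         (M.vtxOf e = M.vtxOf p1.2 ∧ M.vtxOf (M.α e) = M.vtxOf p1.1)) := by
    intro P hP p1 hp1 p hp hns
    obtain ⟨-, hc1, hv1, hw1⟩ := hfibmem P p1 hp1
    obtain ⟨-, hc2, hv2, hw2⟩ := hfibmem P p hp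
    have hab : M.vtxOf p1.1 ≠ M.vtxOf p1.2 := by
      rw [hv1, hw1]
      exact (Finset.mem_offDiag.mp hP).2.2
    exact shared_edge_of_two_verts hTPM hns (Equiv.Perm.SameCycle.refl _ _) hc1
      (Equiv.Perm.SameCycle.refl _ _) hc2 (hv1.trans hv2.symm) (hw1.trans hw2.symm) hab
  have hc2bound : ∀ P ∈ t, (S.filter (fun p => Φ p = P)).card ≤ 2 := by
    intro P hP
    by_cases hfe : (S.filter (fun p => Φ p = P)).Nonempty
    · obtain ⟨p1, hp1⟩ := hfe
      have hcard2 : ((univ : Finset Bool)).card = 2 := by simp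
      rw [← hcard2]
      refine Finset.card_le_card_of_injOn (fun p => decide (M.φ.SameCycle p1.1 p.1))
        (fun _ _ => mem_univ _) ?_
      intro p hp p' hp' hgg
      simp only [Finset.mem_coe] at hp hp'
      by_cases hb1 : M.φ.SameCycle p1.1 p.1 <;> by_cases hb2 : M.φ.SameCycle p1.1 p'.1
      · exact huniq P p hp p' hp' (hb1.symm.trans hb2)
      · simp [hb1, hb2] at hgg
      · simp [hb1, hb2] at hgg
      · obtain ⟨e, he1, he2, he3⟩ := hEx P hP p1 hp1 p hp hb1
        obtain ⟨e', he1', he2', he3'⟩ := hEx P hP p1 hp1 p' hp' hb2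
        have hee : e' = e ∨ e' = M.α e := same_edge_of_endpoints hTPM he3 he3'
        have he'e : e' = e := by
          rcases hee with rfl | h2
          · rfl
          · exfalso
            rw [h2] at he1'
            exact fnorep e (he1.symm.trans he1')
        have hpae : M.φ.SameCycle p.1 (M.α e) := by
          rcases he2 with hh | hh
          · exact absurd (he1.trans hh.symm) hb1
          · exact hh
        have hpae' : M.φ.SameCycle p'.1 (M.α e) := by
          rw [he'e] at he2'
          rcases he2' with hh | hh
          · exact absurd (he1.trans hh.symm) hb2
          · exact hh
        exact huniq P p hp p' hp' (hpae.trans hpae'.symm)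
    · rw [Finset.not_nonempty_iff_eq_empty] at hfe
      rw [hfe]
      simp
  have hBcard : (t.filter (fun P => 2 ≤ (S.filter (fun p => Φ p = P)).card)).card
      ≤ Fintype.card M.D := by
    have hBex : ∀ P ∈ t.filter (fun P => 2 ≤ (S.filter (fun p => Φ p = P)).card),
        ∃ z : M.D, M.vtxOf z = P.1 ∧ M.vtxOf (M.α z) = P.2 := by
      intro P hP
      rw [Finset.mem_filter] at hP
      obtain ⟨hPt, hc⟩ := hP
      have h1c : 1 < (S.filter (fun p => Φ p = P)).card := by omega
      obtain ⟨p1, hp1, p2, hp2, hne12⟩ := Finset.one_lt_card.mp h1c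
      have hns : ¬ M.φ.SameCycle p1.1 p2.1 := by
        intro hsc
        exact hne12 (huniq P p1 hp1 p2 hp2 hsc)
      obtain ⟨e, he1, he2, he3⟩ := hEx P hPt p1 hp1 p2 hp2 hns
      obtain ⟨-, -, hv1, hw1⟩ := hfibmem P p1 hp1
      rcases he3 with ⟨h1, h2⟩ | ⟨h1, h2⟩
      · exact ⟨e, h1.trans hv1, h2.trans hw1⟩
      · refine ⟨M.α e, h2.trans hv1, ?_⟩
        rw [M.α_invol]
        exact h1.trans hw1
    set g : Quotient (sameCycleSetoid M.σ) × Quotient (sameCycleSetoid M.σ) → M.D := fun P =>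
      if hex : ∃ z : M.D, M.vtxOf z = P.1 ∧ M.vtxOf (M.α z) = P.2 then hex.choose else d0
      with hgdef
    rw [← Finset.card_univ (α := M.D)]
    refine Finset.card_le_card_of_injOn g (fun _ _ => mem_univ _) ?_
    intro P hP P' hP' heq
    simp only [Finset.mem_coe] at hP hP'
    have hex := hBex P hP
    have hex' := hBex P' hP'
    rw [hgdef] at heq
    simp only [dif_pos hex, dif_pos hex'] at heq
    obtain ⟨hz1, hz2⟩ := hex.choose_spec
    obtain ⟨hz1', hz2'⟩ := hex'.choose_spec
    have h1 : P.1 = P'.1 := by rw [← hz1, ← hz1', heq]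
    have h2 : P.2 = P'.2 := by rw [← hz2, ← hz2', heq]
    exact Prod.ext_iff.mpr ⟨h1, h2⟩
  have hup : S.card ≤ (M.V * M.V - M.V) + 2 * M.E := by
    have htcard : t.card = M.V * M.V - M.V := by
      rw [htdef, Finset.offDiag_card, Finset.card_univ, ← hVcard]
    calc S.card = ∑ P ∈ t, (S.filter (fun p => Φ p = P)).card := hSsum2
      _ ≤ ∑ P ∈ t, (1 + if 2 ≤ (S.filter (fun p => Φ p = P)).card then 1 else 0) := by
          refine Finset.sum_le_sum (fun P hP => ?_)
          have h2c := hc2bound P hP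
          by_cases h2 : 2 ≤ (S.filter (fun p => Φ p = P)).card
          · simp only [if_pos h2]
            omega
          · simp only [if_neg h2]
            omega
      _ = t.card + (t.filter (fun P => 2 ≤ (S.filter (fun p => Φ p = P)).card)).card := by
          rw [Finset.sum_add_distrib, Finset.sum_const, smul_eq_mul, mul_one,
            Finset.sum_boole]
          simp
      _ ≤ (M.V * M.V - M.V) + 2 * M.E := by
          rw [htcard]
          have hB := hBcard
          omega
  -- FINISH
  have hVV : M.V ≤ M.V * M.V := Nat.le_mul_of_pos_left _ hV1
  obtain ⟨W, hW⟩ : ∃ W, W = M.V * M.V := ⟨_, rfl⟩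
  rw [← hW] at hup hVV
  have h7 : 7 * M.V ≤ W := by omega
  rw [hW] at h7
  exact Nat.le_of_mul_le_mul_right h7 (by omega)

lemma dual_phi (M : TorusMap) : M.dual.φ = M.σ := by
  ext x
  show M.σ (M.α (M.α x)) = M.σ x
  exact congrArg M.σ (M.α_invol x)

lemma dual_meet (hM : M.IsTPM) (d d' : M.D) (hdd' : ¬ M.σ.SameCycle d d') :
    ((M.edgeOf '' {x | M.σ.SameCycle d x}) ∩ (M.edgeOf '' {x | M.σ.SameCycle d' x}) = ∅ ∧
      ((fOf M '' {x | M.σ.SameCycle d x}) ∩ (fOf M '' {x | M.σ.SameCycle d' x})).Subsingleton) ∨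
    (∃ e, M.σ.SameCycle d e ∧
      (M.edgeOf '' {x | M.σ.SameCycle d x}) ∩ (M.edgeOf '' {x | M.σ.SameCycle d' x})
        = {M.edgeOf e} ∧
      (fOf M '' {x | M.σ.SameCycle d x}) ∩ (fOf M '' {x | M.σ.SameCycle d' x})
        = {fOf M e, fOf M (M.α e)}) := by
  have hTPM := hM
  obtain ⟨hne, ht, ⟨noloop, nomulti⟩, deg3, fsimple, fnorep, meet⟩ := hM
  by_cases hex : ∃ e, M.σ.SameCycle d e ∧ M.σ.SameCycle d' (M.α e)
  · obtain ⟨e, hde, hd'αe⟩ := hex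
    right
    refine ⟨e, hde, ?_, ?_⟩
    · ext q
      simp only [Set.mem_inter_iff, Set.mem_image, Set.mem_setOf_eq, Set.mem_singleton_iff]
      constructor
      · rintro ⟨⟨z, hz, rfl⟩, ⟨z', hz', hzz'⟩⟩
        rcases edgeOf_eq_iff.mp hzz' with rfl | heq
        · exact absurd (hz.trans hz'.symm) hdd'
        · have hαz : M.α z = z' := by rw [heq, M.α_invol]
          have hd'αz : M.σ.SameCycle d' (M.α z) := by rw [hαz]; exact hz'
          rcases nomulti e z (hde.symm.trans hz) (hd'αe.symm.trans hd'αz) with rfl | rfl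
          · rfl
          · exact edgeOf_alpha e
      · rintro rfl
        exact ⟨⟨e, hde, rfl⟩, ⟨M.α e, hd'αe, edgeOf_alpha e⟩⟩
    · have hphiv : M.vtxOf (M.φ e) = M.vtxOf (M.α e) :=
        (Quot.sound (sc_apply M.σ (M.α e))).symm
      ext f
      simp only [Set.mem_inter_iff, Set.mem_image, Set.mem_setOf_eq, Set.mem_insert_iff,
        Set.mem_singleton_iff]
      constructor
      · rintro ⟨⟨a, ha, rfl⟩, ⟨b, hb, hba⟩⟩
        by_cases hsc : M.φ.SameCycle e a
        · left
          exact (Quot.sound hsc).symm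
        · have hab : M.vtxOf e ≠ M.vtxOf (M.φ e) := by
            rw [hphiv]
            intro hh
            exact hdd' ((hde.trans (vtxOf_eq_iff.mp hh)).trans hd'αe.symm)
          have hvb : M.vtxOf (M.φ e) = M.vtxOf b := by
            rw [hphiv]
            exact Quot.sound (hd'αe.symm.trans hb)
          obtain ⟨e2, he21, he22, he23⟩ := shared_edge_of_two_verts hTPM hsc
            (Equiv.Perm.SameCycle.refl _ _) (sc_apply M.φ e)
            (Equiv.Perm.SameCycle.refl _ _) ((Quotient.exact hba).symm)
            (Quot.sound (hde.symm.trans ha)) hvb hab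
          rw [hphiv] at he23
          rcases same_edge hTPM (by tauto) with rfl | rfl
          · rcases he22 with hh | hh
            · exact absurd hh.symm hsc
            · right
              exact Quot.sound hh
          · exact absurd he21 (fnorep e)
      · rintro (rfl | rfl)
        · refine ⟨⟨e, hde, rfl⟩, ⟨M.φ e, hd'αe.trans (sc_apply M.σ (M.α e)), ?_⟩⟩
          exact (Quot.sound (sc_apply M.φ e)).symm
        · have hh : M.φ (M.α e) = M.σ e := by
            show M.σ (M.α (M.α e)) = M.σ e
            rw [M.α_invol]
          refine ⟨⟨M.φ (M.α e), ?_, ?_⟩, ⟨M.α e, hd'αe, rfl⟩⟩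
          · rw [hh]
            exact hde.trans (sc_apply M.σ e)
          · exact (Quot.sound (sc_apply M.φ (M.α e))).symm
  · left
    constructor
    · ext q
      simp only [Set.mem_inter_iff, Set.mem_image, Set.mem_setOf_eq,
        Set.mem_empty_iff_false, iff_false]
      rintro ⟨⟨z, hz, rfl⟩, ⟨z', hz', hzz'⟩⟩
      rcases edgeOf_eq_iff.mp hzz' with rfl | heq
      · exact hdd' (hz.trans hz'.symm)
      · refine hex ⟨z, hz, ?_⟩
        have hαz : M.α z = z' := by rw [heq, M.α_invol]
        rw [hαz]
        exact hz'
    · rintro f1 ⟨⟨a, ha, rfl⟩, ⟨b, hb, hba⟩⟩ f2 ⟨⟨a2, ha2, rfl⟩, ⟨b2, hb2, hb2a⟩⟩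
      by_cases hsc : M.φ.SameCycle a a2
      · exact Quot.sound hsc
      · exfalso
        have hab : M.vtxOf a ≠ M.vtxOf b := by
          intro hh
          exact hdd' ((ha.trans (vtxOf_eq_iff.mp hh)).trans hb.symm)
        obtain ⟨e, he1, he2, he3⟩ := shared_edge_of_two_verts hTPM hsc
          (Equiv.Perm.SameCycle.refl _ _) ((Quotient.exact hba).symm)
          (Equiv.Perm.SameCycle.refl _ _) ((Quotient.exact hb2a).symm)
          (Quot.sound (ha.symm.trans ha2).symm).symm (Quot.sound (hb.symm.trans hb2).symm).symm
          hab
        rcases he3 with ⟨h1, h2⟩ | ⟨h1, h2⟩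
        · exact hex ⟨e, ha.trans (vtxOf_eq_iff.mp h1).symm,
            hb.trans (vtxOf_eq_iff.mp h2).symm⟩
        · refine hex ⟨M.α e, ha.trans (vtxOf_eq_iff.mp h2).symm, ?_⟩
          rw [M.α_invol]
          exact hb.trans (vtxOf_eq_iff.mp h1).symm

lemma dual_isTPM (M : TorusMap) (hM : M.IsTPM) : M.dual.IsTPM := by
  have hTPM := hM
  obtain ⟨hne, ht, ⟨noloop, nomulti⟩, deg3, fsimple, fnorep, meet⟩ := hM
  have hface3 : M.FaceGe3 := faceGe3 hTPM
  have hdφ : M.dual.φ = M.σ := dual_phi M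
  refine ⟨hne, ?_, ⟨?_, ?_⟩, ?_, ?_, ?_, ?_⟩
  · -- OnTorus
    show (M.dual.V : ℤ) - M.dual.E + M.dual.F = 0
    have h1 : M.dual.V = M.F := rfl
    have h2 : M.dual.E = M.E := rfl
    have h3 : M.dual.F = M.V := by
      show numCycles M.dual.φ = numCycles M.σ
      rw [hdφ]
      rfl
    rw [h1, h2, h3]
    have h4 := ht
    unfold TorusMap.OnTorus at h4
    linarith
  · -- NoLoop
    exact fnorep
  · -- NoMulti
    intro d d' h1 h2
    have hnd : ¬ M.φ.SameCycle d (M.α d) := fnorep d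
    have hd : M.edgeOf d ∈ M.sharedEdges d (M.α d) :=
      ⟨⟨d, Equiv.Perm.SameCycle.refl _ _, rfl⟩,
       ⟨M.α d, Equiv.Perm.SameCycle.refl _ _, edgeOf_alpha d⟩⟩
    have hd' : M.edgeOf d' ∈ M.sharedEdges d (M.α d) :=
      ⟨⟨d', h1, rfl⟩, ⟨M.α d', h2, edgeOf_alpha d'⟩⟩
    rcases meet d (M.α d) hnd with ⟨hemp, -⟩ | ⟨e, -, hE, -⟩
    · rw [hemp] at hd
      exact absurd hd (Set.notMem_empty _)
    · rw [hE] at hd hd'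
      have h5 : M.edgeOf d = M.edgeOf d' := hd.trans hd'.symm
      exact edgeOf_eq_iff.mp h5
  · -- DegGe3
    exact hface3
  · -- FaceSimple
    intro x y h1 h2
    rw [hdφ] at h1
    exact fsimple x y h2 h1
  · -- FaceNoRepeatEdge
    intro x
    rw [hdφ]
    exact noloop x
  · -- MeetProperly
    intro d d' hnd
    rw [hdφ] at hnd
    have hmain := dual_meet hTPM d d' hnd
    show (M.dual.sharedEdges d d' = ∅ ∧ (M.dual.sharedVerts d d').Subsingleton) ∨ _
    simp only [TorusMap.sharedEdges, TorusMap.sharedVerts, TorusMap.faceSet, hdφ,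
      TorusMap.MeetProperly]
    exact hmain

end TPMProof

/-- **Every toroidal polyhedral map has at least 7 vertices and, dually, at
least 7 faces.** -/
theorem TPM_vertices_and_faces_ge_seven (M : TorusMap) (h : M.IsTPM) :
    7 ≤ M.V ∧ 7 ≤ M.F := by
  exact ⟨TPMProof.sevenV M h, TPMProof.sevenV M.dual (TPMProof.dual_isTPM M h)⟩
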